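/- arXiv:1702.07067 — 3 statements merged into one kernel-verified Lean document; each statement's English description precedes it below -/
import Mathlib

section
/- For every z ∈ ℂ and every complex λ with Re(λ) > -1, one has 2^{-1/2}π^{-3/4} e^{-z²/4} ∫₀^∞ e^{zx - x²/2} x^λ dx = Σ_{k=0}^∞ b_k(λ) z^k, where b_k(λ) = π^{-3/4} 2^{(k+λ)/2 - 1} Σ_{m=0}^{⌊k/2⌋} [Γ((k+λ+1)/2 - m)/(m!(k-2m)!)] · (-1)^m / 2^{3m}. -/
open MeasureTheory Set Complex

lemma sq_cpow {x : ℝ} (hx : 0 < x) (u : ℂ) : ((x:ℂ) ^ (2:ℕ)) ^ u = (x:ℂ) ^ (2 * u) := by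
  have him : (Complex.log x * 2).im = 0 := by
    rw [← Complex.ofReal_log hx.le]
    simp
  rw [Complex.cpow_mul u (by rw [him]; exact neg_neg_iff_pos.mpr Real.pi_pos)
    (by rw [him]; exact Real.pi_pos.le)]
  norm_num

lemma moment {w : ℂ} (hw : -1 < w.re) :
    ∫ x in Ioi (0:ℝ), (x:ℂ) ^ w * Complex.exp (-(x:ℂ) ^ 2 / 2)
      = 2 ^ ((w + 1) / 2 - 1) * Complex.Gamma ((w + 1) / 2) := by
  have ha : 0 < ((w + 1) / 2).re := by
    simp [Complex.div_re]
    linarith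
  have key := integral_cpow_mul_exp_neg_mul_Ioi ha (r := 1/2) (by norm_num)
  have cov := integral_comp_rpow_Ioi_of_pos
    (g := fun t : ℝ => (t:ℂ) ^ ((w + 1) / 2 - 1) * Complex.exp (-(((1:ℝ)/2 : ℝ) * (t:ℝ) : ℂ)))
    (p := 2) two_pos
  rw [key] at cov
  have lhs_eq : (∫ x in Ioi (0:ℝ),
      ((2:ℝ) * x ^ ((2:ℝ) - 1)) • ((((x ^ (2:ℝ) : ℝ)):ℂ) ^ ((w + 1) / 2 - 1) *
        Complex.exp (-(((1:ℝ)/2 : ℝ) * ((x ^ (2:ℝ) : ℝ)) : ℂ)))) =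
      2 * ∫ x in Ioi (0:ℝ), (x:ℂ) ^ w * Complex.exp (-(x:ℂ) ^ 2 / 2) := by
    rw [← integral_const_mul]
    refine setIntegral_congr_fun measurableSet_Ioi fun x hx => ?_
    have hx : (0:ℝ) < x := hx
    have hx0 : (x:ℂ) ≠ 0 := by exact_mod_cast hx.ne'
    have h2 : (x ^ (2:ℝ) : ℝ) = x ^ (2:ℕ) := by
      rw [show (2:ℝ) = ((2:ℕ):ℝ) by norm_num, Real.rpow_natCast]
    rw [h2]
    have hcast : (((x ^ (2:ℕ) : ℝ)):ℂ) = (x:ℂ) ^ (2:ℕ) := by push_cast; ring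
    rw [hcast, sq_cpow hx]
    have hexp : 2 * ((w + 1) / 2 - 1) = w - 1 := by ring
    rw [hexp]
    have harg : (-(((1:ℝ)/2 : ℝ) * ((x:ℝ) ^ (2:ℕ)) : ℂ)) = -(x:ℂ) ^ 2 / 2 := by
      push_cast; ring
    rw [harg]
    rw [real_smul]
    have : ((2 * x ^ ((2:ℝ)-1) : ℝ) : ℂ) = 2 * (x:ℂ) := by
      norm_num
    rw [this]
    have hxw : (x:ℂ) ^ w = (x:ℂ) ^ (w - 1) * (x:ℂ) := by
      conv_lhs => rw [show w = (w - 1) + 1 by ring]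
      rw [Complex.cpow_add _ _ hx0, Complex.cpow_one]
    rw [hxw]
    ring
  rw [lhs_eq] at cov
  have hrhs : ((1:ℂ) / ((1:ℝ)/2 : ℝ)) ^ ((w + 1) / 2) = 2 ^ ((w + 1) / 2) := by
    norm_num
  rw [hrhs] at cov
  have h2 : (2:ℂ) ^ ((w + 1) / 2 - 1) = 2 ^ ((w + 1) / 2) / 2 := by
    rw [Complex.cpow_sub _ _ two_ne_zero, Complex.cpow_one]
  rw [h2]
  linear_combination cov / 2

lemma seriesInt (lam : ℂ) (hlam : -1 < lam.re) (z : ℂ) :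
    HasSum (fun n : ℕ => z ^ n / n.factorial *
        (2 ^ ((lam + n + 1) / 2 - 1) * Complex.Gamma ((lam + n + 1) / 2)))
      (∫ x in Ioi (0:ℝ), Complex.exp (z * x - (x:ℂ) ^ 2 / 2) * (x:ℂ) ^ lam)
    ∧ Summable (fun n : ℕ => ‖z ^ n / (n.factorial : ℂ) *
        (2 ^ ((lam + n + 1) / 2 - 1) * Complex.Gamma ((lam + n + 1) / 2))‖) := by
  set c := lam.re with hc
  set F : ℕ → ℝ → ℂ := fun n x => z ^ n / n.factorial *
      ((x:ℂ) ^ (lam + n) * Complex.exp (-(x:ℂ) ^ 2 / 2)) with hF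
  -- norm of F n x on Ioi 0
  have hnorm : ∀ (n : ℕ) (x : ℝ), 0 < x → ‖F n x‖ =
      ‖z‖ ^ n / n.factorial * (x ^ (c + n) * Real.exp (-x ^ 2 / 2)) := by
    intro n x hx
    have h1 : ‖(x:ℂ) ^ (lam + n)‖ = x ^ (c + n) := by
      rw [Complex.norm_cpow_eq_rpow_re_of_pos hx]
      simp [hc]
    have h2 : ‖Complex.exp (-(x:ℂ) ^ 2 / 2)‖ = Real.exp (-x ^ 2 / 2) := by
      rw [show (-(x:ℂ) ^ 2 / 2) = ((-x ^ 2 / 2 : ℝ) : ℂ) by push_cast; ring,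
        Complex.norm_exp, Complex.ofReal_re]
    simp only [hF]
    rw [norm_mul, norm_mul, h1, h2, norm_div, norm_pow,
      Complex.norm_natCast]
  -- integrability of each F n
  have hFint : ∀ n : ℕ, IntegrableOn (F n) (Ioi 0) := by
    intro n
    have hmeas : AEStronglyMeasurable (F n) (volume.restrict (Ioi 0)) := by
      refine (continuousOn_const.mul (ContinuousOn.mul ?_ ?_)).aestronglyMeasurable
        measurableSet_Ioi
      · exact fun x hx => (Complex.continuousAt_ofReal_cpow_const x _
          (Or.inr (ne_of_gt hx))).continuousWithinAt
      · exact (Complex.continuous_exp.comp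
          (((Complex.continuous_ofReal.pow 2).neg.div_const 2))).continuousOn
    have hbd : IntegrableOn (fun x : ℝ => ‖z‖ ^ n / n.factorial *
        (x ^ (c + n) * Real.exp (-(1/2 : ℝ) * x ^ 2))) (Ioi 0) := by
      exact (integrableOn_rpow_mul_exp_neg_mul_sq (by norm_num)
        (by push_cast; linarith [Nat.cast_nonneg (α := ℝ) n])).const_mul _
    refine Integrable.mono' hbd hmeas ?_
    filter_upwards [ae_restrict_mem measurableSet_Ioi] with x hx
    rw [hnorm n x hx]
    apply le_of_eq
    congr 1
    ring_nf
  -- value of each integral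
  have hFval : ∀ n : ℕ, ∫ x in Ioi (0:ℝ), F n x = z ^ n / n.factorial *
      (2 ^ ((lam + n + 1) / 2 - 1) * Complex.Gamma ((lam + n + 1) / 2)) := by
    intro n
    rw [hF]
    simp only
    rw [integral_const_mul]
    congr 1
    exact moment (by simp [hc] at hlam ⊢; linarith [Nat.cast_nonneg (α := ℝ) n])
  -- the dominating function
  set D : ℝ → ℝ := fun x => Real.exp (‖z‖ * x) * (x ^ c * Real.exp (-x ^ 2 / 2))
    with hD
  have hDint : IntegrableOn D (Ioi 0) := by
    have hmeas : AEStronglyMeasurable D (volume.restrict (Ioi 0)) := by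
      refine ContinuousOn.aestronglyMeasurable ?_ measurableSet_Ioi
      refine ((Real.continuous_exp.comp (continuous_const.mul continuous_id)).continuousOn.mul
        (ContinuousOn.mul ?_ (Real.continuous_exp.comp (by fun_prop)).continuousOn))
      exact fun x hx => (Real.continuousAt_rpow_const x c (Or.inl (ne_of_gt hx))).continuousWithinAt
    have hbd : IntegrableOn (fun x : ℝ => Real.exp (‖z‖ ^ 2) *
        (x ^ c * Real.exp (-(1/4 : ℝ) * x ^ 2))) (Ioi 0) :=
      (integrableOn_rpow_mul_exp_neg_mul_sq (by norm_num) hlam).const_mul _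
    refine Integrable.mono' hbd hmeas ?_
    filter_upwards [ae_restrict_mem measurableSet_Ioi] with x hx
    have hx0 : (0:ℝ) < x := hx
    have hDnn : 0 ≤ D x := by
      apply mul_nonneg (Real.exp_nonneg _)
      exact mul_nonneg (Real.rpow_nonneg hx0.le _) (Real.exp_nonneg _)
    rw [Real.norm_of_nonneg hDnn, hD]
    have key : Real.exp (‖z‖ * x) * Real.exp (-x ^ 2 / 2) ≤
        Real.exp (‖z‖ ^ 2) * Real.exp (-(1/4) * x ^ 2) := by
      rw [← Real.exp_add, ← Real.exp_add]
      apply Real.exp_le_exp.mpr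
      nlinarith [sq_nonneg (x / 2 - ‖z‖)]
    calc Real.exp (‖z‖ * x) * (x ^ c * Real.exp (-x ^ 2 / 2))
        = (Real.exp (‖z‖ * x) * Real.exp (-x ^ 2 / 2)) * x ^ c := by ring
      _ ≤ (Real.exp (‖z‖ ^ 2) * Real.exp (-(1/4) * x ^ 2)) * x ^ c := by
          exact mul_le_mul_of_nonneg_right key (Real.rpow_nonneg hx0.le _)
      _ = Real.exp (‖z‖ ^ 2) * (x ^ c * Real.exp (-(1/4 : ℝ) * x ^ 2)) := by ring
  -- summability of the integrals of the norms
  have hsumnorm : Summable fun n : ℕ => ∫ x in Ioi (0:ℝ), ‖F n x‖ := by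
    apply summable_of_sum_range_le (c := ∫ x in Ioi (0:ℝ), D x)
      (fun n => integral_nonneg fun x => norm_nonneg _)
    intro N
    rw [← integral_finset_sum _ (fun n _ => (hFint n).norm)]
    apply setIntegral_mono_on (integrable_finset_sum _ (fun n _ => (hFint n).norm)) hDint
      measurableSet_Ioi
    intro x hx
    have hx0 : (0:ℝ) < x := hx
    have hterm : ∀ n ∈ Finset.range N, ‖F n x‖ =
        (‖z‖ * x) ^ n / n.factorial * (x ^ c * Real.exp (-x ^ 2 / 2)) := by
      intro n _
      rw [hnorm n x hx0, Real.rpow_add hx0, Real.rpow_natCast]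
      ring
    rw [Finset.sum_congr rfl hterm, ← Finset.sum_mul]
    have hsle : ∑ n ∈ Finset.range N, (‖z‖ * x) ^ n / n.factorial ≤
        Real.exp (‖z‖ * x) :=
      Real.sum_le_exp_of_nonneg (by positivity) N
    exact mul_le_mul_of_nonneg_right hsle
      (mul_nonneg (Real.rpow_nonneg hx0.le _) (Real.exp_nonneg _))
  have hsumnorm' : Summable fun n : ℕ => ‖z ^ n / (n.factorial : ℂ) *
      (2 ^ ((lam + n + 1) / 2 - 1) * Complex.Gamma ((lam + n + 1) / 2))‖ := by
    apply Summable.of_nonneg_of_le (fun n => norm_nonneg _) _ hsumnorm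
    intro n
    rw [← hFval n]
    exact norm_integral_le_integral_norm _
  refine ⟨?_, hsumnorm'⟩
  have hmain := MeasureTheory.hasSum_integral_of_summable_integral_norm hFint hsumnorm
  simp only [hFval] at hmain
  convert hmain using 1
  · rfl
  refine (setIntegral_congr_fun measurableSet_Ioi fun x hx => ?_).symm
  have hx0 : (0:ℝ) < x := hx
  have hx0' : (x:ℂ) ≠ 0 := by exact_mod_cast hx0.ne'
  have hterm : ∀ n : ℕ, F n x = (z * x) ^ n / n.factorial *
      ((x:ℂ) ^ lam * Complex.exp (-(x:ℂ) ^ 2 / 2)) := by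
    intro n
    simp only [hF]
    rw [Complex.cpow_add _ _ hx0', Complex.cpow_natCast, mul_pow]
    ring
  have hsum : HasSum (fun n : ℕ => F n x)
      (Complex.exp (z * x) * ((x:ℂ) ^ lam * Complex.exp (-(x:ℂ) ^ 2 / 2))) := by
    have he : HasSum (fun n : ℕ => (z * x) ^ n / n.factorial) (Complex.exp (z * x)) := by
      rw [Complex.exp_eq_exp_ℂ]
      exact NormedSpace.expSeries_div_hasSum_exp (z * x)
    have h2 := he.mul_right ((x:ℂ) ^ lam * Complex.exp (-(x:ℂ) ^ 2 / 2))
    rw [show (fun n : ℕ => F n x) = fun n : ℕ => (z * x) ^ n / n.factorial *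
      ((x:ℂ) ^ lam * Complex.exp (-(x:ℂ) ^ 2 / 2)) from funext hterm]
    exact h2
  rw [hsum.tsum_eq, show z * (x:ℂ) - (x:ℂ) ^ 2 / 2 = z * (x:ℂ) + -(x:ℂ) ^ 2 / 2 by ring,
    Complex.exp_add]
  ring

lemma expSeries' (z : ℂ) :
    HasSum (fun k : ℕ => if Even k then ((-1:ℂ)/4) ^ (k/2) / (k/2).factorial * z ^ k else 0)
      (Complex.exp (-z ^ 2 / 4))
    ∧ Summable (fun k : ℕ =>
      ‖if Even k then ((-1:ℂ)/4) ^ (k/2) / (k/2).factorial * z ^ k else 0‖) := by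
  set e : ℕ → ℂ := fun k => if Even k then ((-1:ℂ)/4) ^ (k/2) / (k/2).factorial * z ^ k else 0
    with he
  have hinj : Function.Injective (fun m : ℕ => 2 * m) := fun a b h => by simp only at h; omega
  have hzero : ∀ x ∉ Set.range (fun m : ℕ => 2 * m), e x = 0 := by
    intro x hx
    have : ¬ Even x := by
      rintro ⟨r, rfl⟩; exact hx ⟨r, by show 2 * r = r + r; ring⟩
    simp [he, this]
  have hcomp : ∀ m : ℕ, e (2 * m) = ((-1:ℂ)/4) ^ m / m.factorial * z ^ (2 * m) := by
    intro m
    have h2 : (2 * m) / 2 = m := by omega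
    simp [he, h2, even_two_mul]
  have hbase : HasSum (fun m : ℕ => (-z ^ 2 / 4) ^ m / m.factorial)
      (Complex.exp (-z ^ 2 / 4)) := by
    rw [Complex.exp_eq_exp_ℂ]
    exact NormedSpace.expSeries_div_hasSum_exp _
  constructor
  · rw [← hinj.hasSum_iff hzero]
    have : (e ∘ fun m : ℕ => 2 * m) = fun m : ℕ => (-z ^ 2 / 4) ^ m / m.factorial := by
      funext m
      rw [Function.comp_apply, hcomp m, show (-z ^ 2 / 4) = ((-1:ℂ)/4) * z ^ 2 by ring,
        mul_pow, ← pow_mul]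
      ring
    rw [this]
    exact hbase
  · rw [← hinj.summable_iff (f := fun k => ‖e k‖)
      (fun x hx => by show ‖e x‖ = 0; rw [hzero x hx]; exact norm_zero)]
    apply Summable.of_nonneg_of_le (fun m => norm_nonneg _) _
      (Real.summable_pow_div_factorial (‖z‖ ^ 2 / 4))
    intro m
    apply le_of_eq
    show ‖e (2 * m)‖ = _
    rw [hcomp m, norm_mul, norm_div, norm_pow, norm_pow, Complex.norm_natCast, div_pow,
      ← pow_mul]
    simp
    rw [mul_comm 2 m, pow_mul]
    ring

/-- Taylor expansion of the Bargmann transform of `x₊^λ` for `Re λ > -1`: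
`2^{-1/2}π^{-3/4} e^{-z²/4} ∫₀^∞ e^{zx-x²/2} x^λ dx = Σ_k b_k(λ) z^k`, where
`b_k(λ) = π^{-3/4} 2^{(k+λ)/2-1} Σ_{m=0}^{⌊k/2⌋} Γ((k+λ+1)/2-m)/(m!(k-2m)!) (-1)^m/2^{3m}`. -/
theorem bargmann_xplus_lambda_taylor (lam : ℂ) (hlam : -1 < lam.re) (z : ℂ) :
    HasSum
      (fun k : ℕ =>
        ((Real.pi ^ (-(3 / 4) : ℝ) : ℝ) : ℂ) * (2 : ℂ) ^ (((k : ℂ) + lam) / 2 - 1) *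
          (∑ m ∈ Finset.range (k / 2 + 1),
            Complex.Gamma (((k : ℂ) + lam + 1) / 2 - m) /
                ((Nat.factorial m : ℂ) * (Nat.factorial (k - 2 * m) : ℂ)) *
              ((-1 : ℂ) ^ m / 2 ^ (3 * m))) * z ^ k)
      ((((2 : ℝ) ^ (-(1 / 2) : ℝ) * Real.pi ^ (-(3 / 4) : ℝ) : ℝ) : ℂ) *
        Complex.exp (-z ^ 2 / 4) *
        ∫ x in Set.Ioi (0 : ℝ), Complex.exp (z * x - (x : ℂ) ^ 2 / 2) * (x : ℂ) ^ lam) := by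
  obtain ⟨hg, hgn⟩ := seriesInt lam hlam z
  obtain ⟨he, hen⟩ := expSeries' z
  set e : ℕ → ℂ := fun k => if Even k then ((-1:ℂ)/4) ^ (k/2) / (k/2).factorial * z ^ k else 0
    with hedef
  set g : ℕ → ℂ := fun n => z ^ n / n.factorial *
      (2 ^ ((lam + n + 1) / 2 - 1) * Complex.Gamma ((lam + n + 1) / 2)) with hgdef
  have hC := hasSum_sum_range_mul_of_summable_norm hen hgn
  rw [he.tsum_eq, hg.tsum_eq] at hC
  have hC2 := hC.mul_left ((((2 : ℝ) ^ (-(1 / 2) : ℝ) * Real.pi ^ (-(3 / 4) : ℝ) : ℝ) : ℂ))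
  have hval : (((2 : ℝ) ^ (-(1 / 2) : ℝ) * Real.pi ^ (-(3 / 4) : ℝ) : ℝ) : ℂ) *
      (Complex.exp (-z ^ 2 / 4) *
        ∫ x in Set.Ioi (0 : ℝ), Complex.exp (z * x - (x : ℂ) ^ 2 / 2) * (x : ℂ) ^ lam) =
      (((2 : ℝ) ^ (-(1 / 2) : ℝ) * Real.pi ^ (-(3 / 4) : ℝ) : ℝ) : ℂ) *
        Complex.exp (-z ^ 2 / 4) *
        ∫ x in Set.Ioi (0 : ℝ), Complex.exp (z * x - (x : ℂ) ^ 2 / 2) * (x : ℂ) ^ lam :=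
    (mul_assoc _ _ _).symm
  rw [hval] at hC2
  convert hC2 using 2 with k
  · rfl
  -- reindex the finite sum to even indices
  have hsub : (Finset.range (k/2+1)).image (fun m => 2*m) ⊆ Finset.range (k+1) := by
    intro i hi
    simp only [Finset.mem_image, Finset.mem_range] at hi ⊢
    obtain ⟨m, hm, rfl⟩ := hi
    omega
  have hre : ∑ i ∈ Finset.range (k+1), e i * g (k - i) =
      ∑ m ∈ Finset.range (k/2+1), e (2*m) * g (k - 2*m) := by
    have himg : ∑ i ∈ (Finset.range (k/2+1)).image (fun m => 2*m), e i * g (k - i)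
        = ∑ m ∈ Finset.range (k/2+1), e (2*m) * g (k - 2*m) :=
      Finset.sum_image (fun x _ y _ h => by simpa using h)
    rw [← himg]
    refine (Finset.sum_subset hsub ?_).symm
    intro i hi hni
    simp only [Finset.mem_image, Finset.mem_range] at hi hni
    rcases Nat.even_or_odd i with hev | hodd
    · obtain ⟨r, rfl⟩ := hev
      exact (hni ⟨r, by omega, by ring⟩).elim
    · have : ¬ Even i := by simp [Nat.not_even_iff_odd.mpr hodd]
      simp [hedef, this]
  rw [hre, Finset.mul_sum, Finset.sum_mul, Finset.mul_sum]
  refine Finset.sum_congr rfl fun m hm => ?_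
  have hmk : 2 * m ≤ k := by
    simp only [Finset.mem_range] at hm; omega
  -- explicit forms
  have hek : e (2*m) = ((-1:ℂ)/4) ^ m / m.factorial * z ^ (2*m) := by
    have h2 : (2 * m) / 2 = m := by omega
    simp [hedef, h2, even_two_mul]
  have hncast : ((k - 2*m : ℕ) : ℂ) = (k : ℂ) - 2*m := by
    push_cast [Nat.cast_sub hmk]; ring
  have hgamma : (lam + ((k - 2*m : ℕ) : ℂ) + 1) / 2 = ((k : ℂ) + lam + 1) / 2 - m := by
    rw [hncast]; ring
  have hzpow : z ^ (2*m) * z ^ (k - 2*m) = z ^ k := by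
    rw [← pow_add]; congr 1; omega
  -- the 2-power bookkeeping
  have key2 : (((2:ℝ) ^ (-(1/2) : ℝ) : ℝ) : ℂ) * (2:ℂ) ^ ((lam + ((k - 2*m : ℕ) : ℂ) + 1) / 2 - 1)
      * ((4:ℂ) ^ m)⁻¹ =
      (2:ℂ) ^ (((k:ℂ) + lam) / 2 - 1) * (((2:ℂ) ^ (3*m))⁻¹) := by
    have h1 : (((2:ℝ) ^ (-(1/2) : ℝ) : ℝ) : ℂ) = (2:ℂ) ^ (-(1/2) : ℂ) := by
      rw [Complex.ofReal_cpow (by norm_num : (0:ℝ) ≤ 2)]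
      norm_num
    have h4 : ((4:ℂ) ^ m)⁻¹ = (2:ℂ) ^ (-(2*m : ℕ) : ℂ) := by
      rw [Complex.cpow_neg, Complex.cpow_natCast]
      congr 1
      rw [show (4:ℂ) = 2^2 by norm_num, ← pow_mul]
    have h8 : ((2:ℂ) ^ (3*m))⁻¹ = (2:ℂ) ^ (-(3*m : ℕ) : ℂ) := by
      rw [Complex.cpow_neg, Complex.cpow_natCast]
    rw [h1, h4, h8, ← Complex.cpow_add _ _ two_ne_zero, ← Complex.cpow_add _ _ two_ne_zero,
      ← Complex.cpow_add _ _ two_ne_zero]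
    congr 1
    rw [hncast]
    push_cast
    ring
  rw [hgamma] at key2
  rw [hek, hgdef]
  simp only
  rw [hgamma, Complex.ofReal_mul]
  have expand : ((-1:ℂ)/4) ^ m = (-1:ℂ)^m * ((4:ℂ)^m)⁻¹ := by
    rw [div_pow]; norm_num [div_eq_mul_inv]
  rw [expand]
  linear_combination (-((((Real.pi ^ (-(3/4):ℝ) : ℝ)):ℂ) *
      Complex.Gamma (((k:ℂ)+lam+1)/2 - (m:ℂ)) * (-1:ℂ)^m /
      ((m.factorial : ℂ) * ((k-2*m).factorial : ℂ)))) *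
    (z^k * key2 + ((((2:ℝ)^(-(1/2):ℝ) : ℝ):ℂ) *
      (2:ℂ)^((((k:ℂ)+lam+1)/2 - (m:ℂ)) - 1) * (((4:ℂ)^m)⁻¹)) * hzpow)
end

section
/- For every z ∈ ℂ, the limit lim_{ε↓0} ∫_{|x|>ε} e^{zx - x²/2}/x dx exists and equals Σ_{ν=0}^∞ (2 z^{2ν+1}/(2ν+1)!) ∫₀^∞ x^{2ν} e^{-x²/2} dx = Σ_{ν=0}^∞ √(2π) (2ν)! z^{2ν+1} / ((2ν+1)! ν! 2^ν). -/
open MeasureTheory Filter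

section PVAux
open Set Real

private noncomputable def pvH (z : ℂ) (x : ℝ) : ℂ :=
  (Complex.exp (z * x) - Complex.exp (-(z * x))) * ((Real.exp (-x ^ 2 / 2) : ℝ) : ℂ) / x

private noncomputable def pvF (z : ℂ) (ν : ℕ) (x : ℝ) : ℂ :=
  2 * z ^ (2 * ν + 1) / ((2 * ν + 1).factorial : ℂ) *
    ((x ^ (2 * ν) * Real.exp (-x ^ 2 / 2) : ℝ) : ℂ)

private lemma hasSum_cexp (w : ℂ) : HasSum (fun n : ℕ => w ^ n / n.factorial) (Complex.exp w) := by
  rw [Complex.exp_eq_exp_ℂ]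
  exact NormedSpace.expSeries_div_hasSum_exp w

private lemma hasSum_odd (w : ℂ) :
    HasSum (fun ν : ℕ => 2 * w ^ (2 * ν + 1) / ((2 * ν + 1).factorial : ℂ))
      (Complex.exp w - Complex.exp (-w)) := by
  have h := (hasSum_cexp w).sub (hasSum_cexp (-w))
  have hinj : Function.Injective (fun ν : ℕ => 2 * ν + 1) := fun a b hab => by
    simp only at hab; omega
  have h0 : ∀ m ∉ Set.range (fun ν : ℕ => 2 * ν + 1),
      w ^ m / m.factorial - (-w) ^ m / m.factorial = 0 := by
    intro m hm
    have he : Even m := by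
      rcases Nat.even_or_odd m with he | ⟨k, hk⟩
      · exact he
      · exact absurd ⟨k, show 2 * k + 1 = m by omega⟩ hm
    rw [he.neg_pow, sub_self]
  have := (hinj.hasSum_iff h0).2 h
  refine this.congr_fun fun ν => ?_
  simp only [Function.comp]
  have : (-w) ^ (2 * ν + 1) = -w ^ (2 * ν + 1) := Odd.neg_pow ⟨ν, by ring⟩ w
  rw [this]
  ring

private lemma pvH_hasSum (z : ℂ) {x : ℝ} (hx : x ≠ 0) :
    HasSum (fun ν => pvF z ν x) (pvH z x) := by
  have h := (hasSum_odd (z * x)).mul_right (((Real.exp (-x ^ 2 / 2) : ℝ) : ℂ) / x)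
  have heq : ∀ ν : ℕ,
      2 * (z * x) ^ (2 * ν + 1) / (((2 * ν + 1).factorial : ℕ) : ℂ) *
        (((Real.exp (-x ^ 2 / 2) : ℝ) : ℂ) / x) = pvF z ν x := by
    intro ν
    have hxC : (x : ℂ) ≠ 0 := Complex.ofReal_ne_zero.2 hx
    have key : 2 * (z * (x:ℂ)) ^ (2 * ν + 1) / (((2 * ν + 1).factorial : ℕ) : ℂ) *
        (((Real.exp (-x ^ 2 / 2) : ℝ) : ℂ) / x)
        = (2 * z ^ (2 * ν + 1) / (((2 * ν + 1).factorial : ℕ) : ℂ) *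
          (((x:ℂ)) ^ (2 * ν) * ((Real.exp (-x ^ 2 / 2) : ℝ) : ℂ))) * ((x:ℂ) * (x:ℂ)⁻¹) := by
      rw [mul_pow, pow_succ]
      ring
    rw [key, mul_inv_cancel₀ hxC, mul_one, pvF]
    push_cast
    ring
  have h2 := h.congr_fun (fun ν => (heq ν).symm)
  have e : pvH z x = (Complex.exp (z * x) - Complex.exp (-(z * x))) *
      (((Real.exp (-x ^ 2 / 2) : ℝ) : ℂ) / x) := by
    rw [pvH]
    ring
  rw [e]; exact h2

private lemma norm_exp_sub_exp_neg (w : ℂ) :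
    ‖Complex.exp w - Complex.exp (-w)‖ ≤ Real.exp ‖w‖ * (2 * ‖w‖) := by
  have := (convex_closedBall (0:ℂ) ‖w‖).norm_image_sub_le_of_norm_fderiv_le
    (f := Complex.exp) (C := Real.exp ‖w‖) (x := -w) (y := w)
    (fun x _ => Complex.differentiable_exp.differentiableAt)
    (fun x hx => by
      rw [(Complex.hasDerivAt_exp x).hasFDerivAt.fderiv]
      rw [ContinuousLinearMap.norm_toSpanSingleton]
      rw [Complex.norm_exp]
      exact Real.exp_le_exp.2 ((Complex.re_le_norm x).trans
        (by simpa using mem_closedBall_zero_iff.1 hx)))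
    (by simp) (by simp)
  calc ‖Complex.exp w - Complex.exp (-w)‖ ≤ Real.exp ‖w‖ * ‖w - -w‖ := this
    _ = Real.exp ‖w‖ * (2 * ‖w‖) := by rw [sub_neg_eq_add, ← two_mul, norm_mul]; norm_num

private lemma norm_pvH_le (z : ℂ) {x : ℝ} (hx : 0 < x) :
    ‖pvH z x‖ ≤ 2 * ‖z‖ * Real.exp (‖z‖ * x - x ^ 2 / 2) := by
  have hw : ‖z * (x : ℂ)‖ = ‖z‖ * x := by
    rw [norm_mul, Complex.norm_real, Real.norm_eq_abs, abs_of_pos hx]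
  rw [pvH]
  simp only [norm_div, norm_mul, Complex.norm_real, Real.norm_eq_abs]
  rw [abs_of_pos hx, abs_of_pos (Real.exp_pos _)]
  rw [div_le_iff₀ hx]
  calc ‖Complex.exp (z * x) - Complex.exp (-(z * x))‖ * Real.exp (-x ^ 2 / 2)
      ≤ Real.exp (‖z‖ * x) * (2 * (‖z‖ * x)) * Real.exp (-x ^ 2 / 2) := by
        apply mul_le_mul_of_nonneg_right _ (Real.exp_pos _).le
        simpa [hw, abs_of_pos hx] using norm_exp_sub_exp_neg (z * x)
    _ = 2 * ‖z‖ * Real.exp (‖z‖ * x - x ^ 2 / 2) * x := by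
        rw [show ‖z‖ * x - x ^ 2 / 2 = ‖z‖ * x + -x ^ 2 / 2 by ring, Real.exp_add]
        ring

private lemma intM (ν : ℕ) : IntegrableOn (fun x : ℝ => x ^ (2 * ν) * Real.exp (-x ^ 2 / 2))
    (Set.Ioi (0:ℝ)) := by
  have h := integrableOn_rpow_mul_exp_neg_mul_sq (b := 1/2) (by norm_num)
    (s := (2 * ν : ℕ)) ((by norm_num : (-1:ℝ) < 0).trans_le (Nat.cast_nonneg _))
  have : (fun x : ℝ => x ^ ((2 * ν : ℕ) : ℝ) * Real.exp (-(1/2) * x ^ 2))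
      = fun x : ℝ => x ^ (2 * ν) * Real.exp (-x ^ 2 / 2) := by
    funext x
    rw [Real.rpow_natCast]
    ring_nf
  rwa [this] at h

private lemma intMk (k : ℕ) : IntegrableOn (fun x : ℝ => x ^ k * Real.exp (-x ^ 2 / 2))
    (Set.Ioi (0:ℝ)) := by
  have h := integrableOn_rpow_mul_exp_neg_mul_sq (b := 1/2) (by norm_num)
    (s := (k : ℕ)) ((by norm_num : (-1:ℝ) < 0).trans_le (Nat.cast_nonneg _))
  have : (fun x : ℝ => x ^ ((k : ℕ) : ℝ) * Real.exp (-(1/2) * x ^ 2))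
      = fun x : ℝ => x ^ k * Real.exp (-x ^ 2 / 2) := by
    funext x
    rw [Real.rpow_natCast]
    ring_nf
  rwa [this] at h

private lemma tendsto_pow_gauss (k : ℕ) :
    Tendsto (fun x : ℝ => x ^ k * Real.exp (-x ^ 2 / 2)) atTop (nhds 0) := by
  have h := rpow_mul_exp_neg_mul_sq_isLittleO_exp_neg (b := 1/2) (by norm_num) (k : ℝ)
  have h2 : Tendsto (fun x : ℝ => Real.exp (-(1/2) * x)) atTop (nhds 0) := by
    have : Tendsto (fun x : ℝ => -(1/2) * x) atTop atBot :=
      Tendsto.const_mul_atTop_of_neg (by norm_num) tendsto_id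
    exact Real.tendsto_exp_atBot.comp this
  have h3 := h.trans_tendsto h2
  have : (fun x : ℝ => x ^ ((k : ℕ) : ℝ) * Real.exp (-(1/2) * x ^ 2))
      = fun x : ℝ => x ^ k * Real.exp (-x ^ 2 / 2) := by
    funext x; rw [Real.rpow_natCast]; ring_nf
  rwa [this] at h3

private lemma gauss_rec (k : ℕ) :
    ∫ x in Set.Ioi (0:ℝ), x ^ (k + 2) * Real.exp (-x ^ 2 / 2)
      = (k + 1) * ∫ x in Set.Ioi (0:ℝ), x ^ k * Real.exp (-x ^ 2 / 2) := by
  set E : ℝ → ℝ := fun x => Real.exp (-x ^ 2 / 2) with hE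
  have hderiv : ∀ x ∈ Set.Ioi (0:ℝ),
      HasDerivAt (fun x : ℝ => -(x ^ (k + 1) * E x))
        (x ^ (k + 2) * E x - (k + 1) * (x ^ k * E x)) x := by
    intro x _
    have h1 : HasDerivAt (fun x : ℝ => x ^ (k + 1)) ((k + 1) * x ^ k) x := by
      simpa using hasDerivAt_pow (k + 1) x
    have hinner : HasDerivAt (fun x : ℝ => -x ^ 2 / 2) (-x) x := by
      have := ((hasDerivAt_pow 2 x).div_const 2).neg
      have heq : (fun x : ℝ => -(x ^ 2 / 2)) = fun x : ℝ => -x ^ 2 / 2 := by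
        funext y; ring
      rw [show (-fun x : ℝ => x ^ 2 / 2) = fun x : ℝ => -x ^ 2 / 2 from heq] at this
      have e : -x = -(((2:ℕ):ℝ) * x ^ (2 - 1) / 2) := by norm_num
      rw [e]; exact this
    have h2 : HasDerivAt E (E x * (-x)) x := hinner.exp
    have := (h1.mul h2).neg
    have e : x ^ (k + 2) * E x - (k + 1) * (x ^ k * E x)
        = -((k + 1) * x ^ k * E x + x ^ (k + 1) * (E x * -x)) := by
      simp only [hE]
      ring
    rw [e]; exact this
  have hint : IntegrableOn (fun x : ℝ => x ^ (k + 2) * E x - (k + 1) * (x ^ k * E x))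
      (Set.Ioi (0:ℝ)) := (intMk (k + 2)).sub ((intMk k).const_mul _)
  have htend : Tendsto (fun x : ℝ => -(x ^ (k + 1) * E x)) atTop (nhds 0) := by
    simpa using (tendsto_pow_gauss (k + 1)).neg
  have hcont : ContinuousWithinAt (fun x : ℝ => -(x ^ (k + 1) * E x)) (Set.Ici 0) 0 := by
    apply Continuous.continuousWithinAt
    fun_prop
  have key := integral_Ioi_of_hasDerivAt_of_tendsto hcont hderiv hint htend
  simp only [zero_pow (Nat.succ_ne_zero k), zero_mul, neg_zero, sub_zero] at key
  have := integral_sub (intMk (k + 2)) ((intMk k).const_mul ((k:ℝ) + 1))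
  rw [integral_const_mul] at this
  rw [this] at key
  linarith [key]

private lemma Mval (ν : ℕ) : ∫ x in Set.Ioi (0:ℝ), x ^ (2 * ν) * Real.exp (-x ^ 2 / 2)
    = Real.sqrt (π / 2) * (2 * ν).factorial / (ν.factorial * 2 ^ ν) := by
  induction ν with
  | zero =>
    simp only [Nat.mul_zero, pow_zero, one_mul, Nat.factorial_zero, Nat.cast_one, mul_one]
    have h := integral_gaussian_Ioi (1/2)
    have heq : (fun x : ℝ => Real.exp (-(1/2) * x ^ 2)) = fun x : ℝ => Real.exp (-x ^ 2 / 2) := by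
      funext x; ring_nf
    rw [heq] at h
    rw [h]
    rw [show π / (1/2) = 4 * (π / 2) by ring, Real.sqrt_mul (by norm_num) (π/2),
      show Real.sqrt 4 = 2 by
        rw [show (4:ℝ) = 2 ^ 2 by norm_num, Real.sqrt_sq (by norm_num : (0:ℝ) ≤ 2)]]
    ring
  | succ ν ih =>
    have h1 : 2 * (ν + 1) = 2 * ν + 2 := by ring
    rw [h1, gauss_rec (2 * ν), ih]
    have h2 : ((2 * ν + 2).factorial : ℝ) = (2 * ν + 2) * ((2 * ν + 1) * (2 * ν).factorial) := by
      rw [show 2 * ν + 2 = (2 * ν + 1) + 1 by ring, Nat.factorial_succ, Nat.factorial_succ]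
      push_cast; ring
    have h3 : ((ν + 1).factorial : ℝ) = (ν + 1) * ν.factorial := by
      rw [Nat.factorial_succ]; push_cast; ring
    rw [h2, h3]
    have hν : (ν.factorial : ℝ) ≠ 0 := Nat.cast_ne_zero.2 (Nat.factorial_ne_zero ν)
    field_simp
    push_cast
    ring

private lemma gauss_shift (a : ℝ) : Integrable (fun x : ℝ => Real.exp (a * x - x ^ 2 / 2)) := by
  have h := (integrable_exp_neg_mul_sq (b := 1/2) (by norm_num)).comp_sub_right a
  have h2 := h.const_mul (Real.exp (a ^ 2 / 2))
  have heq : (fun x : ℝ => Real.exp (a ^ 2 / 2) * Real.exp (-(1/2) * (x - a) ^ 2))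
      = fun x : ℝ => Real.exp (a * x - x ^ 2 / 2) := by
    funext x
    rw [← Real.exp_add]
    congr 1
    ring
  rwa [heq] at h2

private lemma meas_f (w : ℂ) :
    Measurable (fun x : ℝ => Complex.exp (w * x - (x:ℂ) ^ 2 / 2) / x) := by
  fun_prop

private lemma meas_pvH (z : ℂ) : Measurable (pvH z) := by
  unfold pvH
  fun_prop

private lemma re_quad (w : ℂ) (x : ℝ) : (w * x - (x:ℂ) ^ 2 / 2).re = w.re * x - x ^ 2 / 2 := by
  have : ((x:ℂ) ^ 2 / 2) = ((x ^ 2 / 2 : ℝ) : ℂ) := by push_cast; ring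
  rw [this, Complex.sub_re, Complex.ofReal_re, Complex.mul_re, Complex.ofReal_re,
    Complex.ofReal_im]
  ring

private lemma integrableOn_f (w : ℂ) {ε : ℝ} (hε : 0 < ε) :
    IntegrableOn (fun x : ℝ => Complex.exp (w * x - (x:ℂ) ^ 2 / 2) / x)
      {x : ℝ | ε < |x|} := by
  have hmeas : MeasurableSet {x : ℝ | ε < |x|} :=
    measurableSet_lt measurable_const _root_.continuous_abs.measurable
  refine Integrable.mono' (((gauss_shift w.re).const_mul ε⁻¹).integrableOn)
    ((meas_f w).aestronglyMeasurable.restrict) ?_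
  rw [ae_restrict_iff' hmeas]
  filter_upwards with x hx
  have hx0 : (0:ℝ) < |x| := hε.trans hx
  rw [norm_div, Complex.norm_exp, re_quad, Complex.norm_real,
    Real.norm_eq_abs]
  rw [div_le_iff₀ hx0]
  calc Real.exp (w.re * x - x ^ 2 / 2) = 1 * Real.exp (w.re * x - x ^ 2 / 2) := (one_mul _).symm
    _ ≤ ε⁻¹ * |x| * Real.exp (w.re * x - x ^ 2 / 2) := by
        apply mul_le_mul_of_nonneg_right _ (Real.exp_pos _).le
        rw [← inv_mul_cancel₀ hε.ne']
        exact mul_le_mul_of_nonneg_left hx.le (by positivity)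
    _ = ε⁻¹ * Real.exp (w.re * x - x ^ 2 / 2) * |x| := by ring

private lemma norm_coeff (z : ℂ) (ν : ℕ) :
    ‖2 * z ^ (2 * ν + 1) / ((2 * ν + 1).factorial : ℂ)‖
      = 2 * ‖z‖ ^ (2 * ν + 1) / ((2 * ν + 1).factorial : ℝ) := by
  rw [norm_div, norm_mul, norm_pow, Complex.norm_natCast]
  norm_num

private lemma summable_coeff (z : ℂ) :
    Summable (fun ν : ℕ => ‖2 * z ^ (2 * ν + 1) / ((2 * ν + 1).factorial : ℂ)‖ *
      (Real.sqrt (π / 2) * (2 * ν).factorial / (ν.factorial * 2 ^ ν))) := by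
  refine Summable.of_nonneg_of_le (fun ν => by positivity) (fun ν => ?_)
    ((Real.summable_pow_div_factorial (‖z‖ ^ 2 / 2)).mul_left (2 * ‖z‖ * Real.sqrt (π / 2)))
  rw [norm_coeff]
  have h1 : ((2 * ν + 1).factorial : ℝ) = (2 * ν + 1) * (2 * ν).factorial := by
    rw [Nat.factorial_succ]; push_cast; ring
  have hfac : (0:ℝ) < (2 * ν).factorial := by exact_mod_cast (2 * ν).factorial_pos
  have hν : (0:ℝ) < ν.factorial := by exact_mod_cast ν.factorial_pos
  have h2ν1 : (0:ℝ) < 2 * (ν:ℝ) + 1 := by positivity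
  have key : 2 * ‖z‖ ^ (2 * ν + 1) / ((2 * ν + 1).factorial : ℝ) *
      (Real.sqrt (π / 2) * (2 * ν).factorial / (ν.factorial * 2 ^ ν))
      = (2 * ‖z‖ * Real.sqrt (π / 2) * ((‖z‖ ^ 2 / 2) ^ ν / ν.factorial)) / (2 * ν + 1) := by
    rw [h1, pow_succ, pow_mul, div_pow]
    field_simp
  rw [key]
  exact div_le_self (by positivity) (by linarith [Nat.cast_nonneg (α := ℝ) ν])

end PVAux

open Set Real in
/-- The principal-value limit `lim_{ε↓0} ∫_{|x|>ε} e^{zx-x²/2}/x dx` exists and equals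
`Σ_ν (2 z^{2ν+1}/(2ν+1)!) ∫₀^∞ x^{2ν} e^{-x²/2} dx
  = Σ_ν √(2π) (2ν)! z^{2ν+1} / ((2ν+1)! ν! 2^ν)`. -/
theorem pv_bargmann_limit (z : ℂ) :
    Tendsto
      (fun ε : ℝ => ∫ x in {x : ℝ | ε < |x|},
        Complex.exp (z * x - (x : ℂ) ^ 2 / 2) / (x : ℂ))
      (nhdsWithin 0 (Set.Ioi 0))
      (nhds (∑' ν : ℕ,
        2 * z ^ (2 * ν + 1) / (Nat.factorial (2 * ν + 1) : ℂ) *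
          (((∫ x in Set.Ioi (0 : ℝ), x ^ (2 * ν) * Real.exp (-x ^ 2 / 2)) : ℝ) : ℂ))) ∧
    (∑' ν : ℕ,
        2 * z ^ (2 * ν + 1) / (Nat.factorial (2 * ν + 1) : ℂ) *
          (((∫ x in Set.Ioi (0 : ℝ), x ^ (2 * ν) * Real.exp (-x ^ 2 / 2)) : ℝ) : ℂ))
      = ∑' ν : ℕ,
        ((Real.sqrt (2 * Real.pi) * (Nat.factorial (2 * ν) : ℝ) : ℝ) : ℂ) *
          z ^ (2 * ν + 1) /
          ((Nat.factorial (2 * ν + 1) : ℂ) * (Nat.factorial ν : ℂ) * 2 ^ ν) := by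
  constructor
  · -- the principal-value limit
    have hFint : ∀ ν : ℕ, Integrable (pvF z ν) (volume.restrict (Ioi (0:ℝ))) := by
      intro ν
      have := ((intM ν).ofReal (𝕜 := ℂ)).const_mul
        (2 * z ^ (2 * ν + 1) / ((2 * ν + 1).factorial : ℂ))
      exact this
    have hnormint : ∀ ν : ℕ, ∫ x in Ioi (0:ℝ), ‖pvF z ν x‖
        = ‖2 * z ^ (2 * ν + 1) / ((2 * ν + 1).factorial : ℂ)‖ *
          (Real.sqrt (π / 2) * (2 * ν).factorial / (ν.factorial * 2 ^ ν)) := by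
      intro ν
      rw [← Mval, ← integral_const_mul]
      refine setIntegral_congr_fun measurableSet_Ioi fun x hx => ?_
      rw [pvF, norm_mul, Complex.norm_real, Real.norm_eq_abs,
        abs_of_nonneg (by have : (0:ℝ) < x := hx; positivity)]
    have hFsum : Summable fun ν : ℕ => ∫ x in Ioi (0:ℝ), ‖pvF z ν x‖ :=
      (summable_coeff z).congr fun ν => (hnormint ν).symm
    have hswap := hasSum_integral_of_summable_integral_norm hFint hFsum
    have hterm : ∀ ν : ℕ, ∫ x in Ioi (0:ℝ), pvF z ν x
        = 2 * z ^ (2 * ν + 1) / (Nat.factorial (2 * ν + 1) : ℂ) *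
          (((∫ x in Set.Ioi (0 : ℝ), x ^ (2 * ν) * Real.exp (-x ^ 2 / 2)) : ℝ) : ℂ) := by
      intro ν
      simp only [pvF]
      rw [integral_const_mul]
      congr 1
      exact integral_ofReal
    have htsum_eq : (∑' ν : ℕ,
        2 * z ^ (2 * ν + 1) / (Nat.factorial (2 * ν + 1) : ℂ) *
          (((∫ x in Set.Ioi (0 : ℝ), x ^ (2 * ν) * Real.exp (-x ^ 2 / 2)) : ℝ) : ℂ))
        = ∫ x in Ioi (0:ℝ), ∑' ν : ℕ, pvF z ν x := by
      rw [← hswap.tsum_eq]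
      exact tsum_congr fun ν => (hterm ν).symm
    rw [htsum_eq]
    have hDCT : Tendsto (fun ε : ℝ => ∫ x in Ioi (0:ℝ), (Ioi ε).indicator (pvH z) x)
        (nhdsWithin 0 (Set.Ioi 0)) (nhds (∫ x in Ioi (0:ℝ), ∑' ν : ℕ, pvF z ν x)) := by
      apply tendsto_integral_filter_of_dominated_convergence
        (bound := fun x : ℝ => 2 * ‖z‖ * Real.exp (‖z‖ * x - x ^ 2 / 2))
      · exact Eventually.of_forall fun ε =>
          (((meas_pvH z).indicator measurableSet_Ioi).aestronglyMeasurable).restrict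
      · refine Eventually.of_forall fun ε => ?_
        rw [ae_restrict_iff' measurableSet_Ioi]
        refine Eventually.of_forall fun x hx => ?_
        by_cases hmem : x ∈ Ioi ε
        · rw [indicator_of_mem hmem]; exact norm_pvH_le z hx
        · rw [indicator_of_notMem hmem, norm_zero]; positivity
      · exact ((gauss_shift ‖z‖).const_mul (2 * ‖z‖)).integrableOn
      · rw [ae_restrict_iff' measurableSet_Ioi]
        refine Eventually.of_forall fun x hx => ?_
        rw [(pvH_hasSum z (ne_of_gt hx)).tsum_eq]
        refine Tendsto.congr' ?_ tendsto_const_nhds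
        have hmem : Iio x ∈ nhdsWithin (0:ℝ) (Set.Ioi 0) :=
          mem_nhdsWithin_of_mem_nhds (Iio_mem_nhds hx)
        filter_upwards [hmem] with ε hε
        exact (indicator_of_mem (show x ∈ Ioi ε from hε) _).symm
    refine Tendsto.congr' ?_ hDCT
    filter_upwards [eventually_mem_nhdsWithin] with ε (hε : ε ∈ Ioi (0:ℝ))
    rw [Set.mem_Ioi] at hε
    -- goal: ∫ Ioi 0, indicator (Ioi ε) (pvH z) = ∫_{|x|>ε} f
    have hset : {x : ℝ | ε < |x|} = Iio (-ε) ∪ Ioi ε := by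
      ext x
      simp only [Set.mem_setOf_eq, Set.mem_union, Set.mem_Iio, Set.mem_Ioi]
      rw [lt_abs]
      constructor
      · rintro (h | h); exacts [Or.inr h, Or.inl (by linarith)]
      · rintro (h | h); exacts [Or.inr (by linarith), Or.inl h]
    have hIoi : IntegrableOn (fun x : ℝ => Complex.exp (z * x - (x:ℂ) ^ 2 / 2) / x) (Ioi ε) :=
      (integrableOn_f z hε).mono_set fun x (hx : ε < x) =>
        show ε < |x| from lt_of_lt_of_le hx (le_abs_self x)
    have hIio : IntegrableOn (fun x : ℝ => Complex.exp (z * x - (x:ℂ) ^ 2 / 2) / x)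
        (Iio (-ε)) :=
      (integrableOn_f z hε).mono_set fun x (hx : x < -ε) =>
        show ε < |x| from lt_of_lt_of_le (by linarith) (neg_le_abs x)
    have hneg : IntegrableOn (fun x : ℝ => -(Complex.exp ((-z) * x - (x:ℂ) ^ 2 / 2) / x))
        (Ioi ε) :=
      (((integrableOn_f (-z) hε).mono_set fun x (hx : ε < x) =>
        show ε < |x| from lt_of_lt_of_le hx (le_abs_self x)).neg)
    have hdisj : Disjoint (Iio (-ε)) (Ioi ε) :=
      (Set.Iio_disjoint_Ici (by linarith)).mono_right Set.Ioi_subset_Ici_self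
    calc ∫ x in Ioi (0:ℝ), (Ioi ε).indicator (pvH z) x
        = ∫ x in Ioi (0:ℝ) ∩ Ioi ε, pvH z x := setIntegral_indicator measurableSet_Ioi
      _ = ∫ x in Ioi ε, pvH z x := by
          rw [Set.Ioi_inter_Ioi, sup_eq_right.2 hε.le]
      _ = ∫ x in Ioi ε, (-(Complex.exp ((-z) * x - (x:ℂ) ^ 2 / 2) / x)
            + Complex.exp (z * x - (x:ℂ) ^ 2 / 2) / x) := by
          refine setIntegral_congr_fun measurableSet_Ioi fun x hx => ?_
          have hx0 : (0:ℝ) < x := hε.trans hx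
          have hxC : (x : ℂ) ≠ 0 := Complex.ofReal_ne_zero.2 hx0.ne'
          have e1 : Complex.exp (z * x - (x:ℂ) ^ 2 / 2)
              = Complex.exp (z * x) * ((Real.exp (-x ^ 2 / 2) : ℝ) : ℂ) := by
            rw [Complex.ofReal_exp, ← Complex.exp_add]
            congr 1
            push_cast
            ring
          have e2 : Complex.exp ((-z) * x - (x:ℂ) ^ 2 / 2)
              = Complex.exp (-(z * x)) * ((Real.exp (-x ^ 2 / 2) : ℝ) : ℂ) := by
            rw [Complex.ofReal_exp, ← Complex.exp_add]
            congr 1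
            push_cast
            ring
          rw [pvH, e1, e2]
          ring
      _ = (∫ x in Ioi ε, -(Complex.exp ((-z) * x - (x:ℂ) ^ 2 / 2) / x))
            + ∫ x in Ioi ε, Complex.exp (z * x - (x:ℂ) ^ 2 / 2) / x :=
          integral_add hneg hIoi
      _ = (∫ x in Iio (-ε), Complex.exp (z * x - (x:ℂ) ^ 2 / 2) / x)
            + ∫ x in Ioi ε, Complex.exp (z * x - (x:ℂ) ^ 2 / 2) / x := by
          congr 1
          rw [← integral_Iic_eq_integral_Iio,
            ← integral_comp_neg_Ioi ε (fun x : ℝ => Complex.exp (z * x - (x:ℂ) ^ 2 / 2) / x)]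
          refine setIntegral_congr_fun measurableSet_Ioi fun x hx => ?_
          push_cast
          rw [show z * -(x:ℂ) - (-(x:ℂ)) ^ 2 / 2 = -z * (x:ℂ) - (x:ℂ) ^ 2 / 2 from by ring,
            div_neg]
      _ = ∫ x in Iio (-ε) ∪ Ioi ε, Complex.exp (z * x - (x:ℂ) ^ 2 / 2) / x :=
          (setIntegral_union hdisj measurableSet_Ioi hIio hIoi).symm
      _ = ∫ x in {x : ℝ | ε < |x|}, Complex.exp (z * x - (x:ℂ) ^ 2 / 2) / x := by
          rw [hset]
  · -- the closed form of the series
    refine tsum_congr fun ν => ?_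
    rw [Mval]
    have h2π : Real.sqrt (2 * π) = 2 * Real.sqrt (π / 2) := by
      rw [show (2:ℝ) * π = 2 ^ 2 * (π / 2) by ring, Real.sqrt_mul (by norm_num) (π / 2),
        Real.sqrt_sq (by norm_num : (0:ℝ) ≤ 2)]
    rw [h2π]
    have hf1 : ((Nat.factorial (2 * ν + 1) : ℕ) : ℂ) ≠ 0 :=
      Nat.cast_ne_zero.2 (Nat.factorial_ne_zero _)
    have hf2 : ((Nat.factorial ν : ℕ) : ℂ) ≠ 0 := Nat.cast_ne_zero.2 (Nat.factorial_ne_zero _)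
    have hf3 : (2 : ℂ) ^ ν ≠ 0 := pow_ne_zero _ two_ne_zero
    push_cast
    field_simp
end

section
/- For every z ∈ ℂ, ∫_ℝ e^{zx - x²/2} sgn(x) dx = Σ_{ν=0}^∞ (2^{ν+1} ν! / (2ν+1)!) z^{2ν+1}, where sgn(x) = 1 for x > 0 and -1 for x < 0. -/
open MeasureTheory Real Set

private lemma moment_real (ν : ℕ) :
    ∫ x in Ioi (0:ℝ), x ^ (2*ν+1) * rexp (-x^2/2) = 2^ν * (Nat.factorial ν : ℝ) := by
  have h := integral_rpow_mul_exp_neg_mul_rpow (p := 2) (q := (2*ν+1 : ℕ))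
    (b := 1/2) two_pos
    (by have := Nat.cast_nonneg (α := ℝ) (2*ν+1); linarith) one_half_pos
  calc ∫ x in Ioi (0:ℝ), x ^ (2*ν+1) * rexp (-x^2/2)
      = ∫ x in Ioi (0:ℝ), x ^ ((2*ν+1 : ℕ) : ℝ) * rexp (-(1/2) * x ^ (2:ℝ)) := by
        refine setIntegral_congr_fun measurableSet_Ioi fun x hx => ?_
        simp only [Real.rpow_natCast, Real.rpow_two]
        ring_nf
    _ = (1/2:ℝ) ^ (-(((2*ν+1 : ℕ):ℝ) + 1)/2) * (1/2) * Gamma ((((2*ν+1 : ℕ):ℝ) + 1)/2) := h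
    _ = 2^ν * (Nat.factorial ν : ℝ) := by
        rw [show -(((2*ν+1 : ℕ):ℝ) + 1)/2 = -((ν+1 : ℕ) : ℝ) by push_cast; ring,
          show (((2*ν+1 : ℕ):ℝ) + 1)/2 = ((ν : ℕ) : ℝ) + 1 by push_cast; ring,
          Real.Gamma_nat_eq_factorial, Real.rpow_neg (by norm_num), Real.rpow_natCast]
        rw [one_div, inv_pow, inv_inv]
        ring

private lemma castEq (ν : ℕ) (x : ℝ) :
    (x:ℂ) ^ (2*ν+1) * Complex.exp (-(x:ℂ)^2/2)
      = ((x ^ (2*ν+1) * rexp (-x^2/2) : ℝ) : ℂ) := by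
  rw [show -(x:ℂ)^2/2 = ((-x^2/2 : ℝ) : ℂ) by push_cast; ring, ← Complex.ofReal_exp]
  push_cast
  ring

private lemma moment_cplx (ν : ℕ) :
    ∫ x in Ioi (0:ℝ), (x:ℂ) ^ (2*ν+1) * Complex.exp (-(x:ℂ)^2/2)
      = ((2^ν * (Nat.factorial ν : ℝ) : ℝ) : ℂ) := by
  simp_rw [castEq]
  rw [show (Complex.ofReal : ℝ → ℂ) = (RCLike.ofReal : ℝ → ℂ) from rfl,
    integral_ofReal, moment_real]

private lemma pointwise_hasSum (z : ℂ) (x : ℝ) :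
    HasSum (fun ν : ℕ => 2 * z ^ (2*ν+1) / ((Nat.factorial (2*ν+1) : ℕ) : ℂ)
        * ((x:ℂ) ^ (2*ν+1) * Complex.exp (-(x:ℂ)^2/2)))
      (Complex.exp (z*x - (x:ℂ)^2/2) - Complex.exp (-(z*x) - (x:ℂ)^2/2)) := by
  have h1 : HasSum (fun n : ℕ => (z*x)^n / (Nat.factorial n : ℂ)) (Complex.exp (z*x)) := by
    simpa [Complex.exp_eq_exp_ℂ] using NormedSpace.expSeries_div_hasSum_exp (z * x)
  have h2 : HasSum (fun n : ℕ => (-(z*x))^n / (Nat.factorial n : ℂ))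
      (Complex.exp (-(z*x))) := by
    simpa [Complex.exp_eq_exp_ℂ] using NormedSpace.expSeries_div_hasSum_exp (-(z * x))
  have h3 := h1.sub h2
  have hinj : Function.Injective (fun ν : ℕ => 2*ν+1) := fun a b h => by
    simp only at h; omega
  have hsupp : ∀ n ∉ Set.range (fun ν : ℕ => 2*ν+1),
      (z*x)^n / (Nat.factorial n : ℂ) - (-(z*x))^n / (Nat.factorial n : ℂ) = 0 := by
    intro n hn
    have hev : Even n := by
      rcases Nat.even_or_odd n with h | h
      · exact h
      · exact absurd (by obtain ⟨m, hm⟩ := h; exact ⟨m, by simp only; omega⟩) hn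
    simp [hev.neg_pow]
  have h4 := (Function.Injective.hasSum_iff
    (f := fun n : ℕ => (z*x)^n / (Nat.factorial n : ℂ) - (-(z*x))^n / (Nat.factorial n : ℂ))
    (g := fun ν : ℕ => 2*ν+1) hinj hsupp).mpr h3
  simp only [Function.comp_def] at h4
  have h5 := h4.mul_right (Complex.exp (-(x:ℂ)^2/2))
  have e1 : ∀ ν : ℕ, ((z*x)^(2*ν+1)/((Nat.factorial (2*ν+1)) : ℂ)
        - (-(z*x))^(2*ν+1)/((Nat.factorial (2*ν+1)):ℂ)) * Complex.exp (-(x:ℂ)^2/2)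
      = 2 * z ^ (2*ν+1) / ((Nat.factorial (2*ν+1) : ℕ) : ℂ)
        * ((x:ℂ) ^ (2*ν+1) * Complex.exp (-(x:ℂ)^2/2)) := by
    intro ν
    rw [(odd_two_mul_add_one ν).neg_pow, mul_pow]
    ring
  have e2 : (Complex.exp (z*x) - Complex.exp (-(z*x))) * Complex.exp (-(x:ℂ)^2/2)
      = Complex.exp (z*x - (x:ℂ)^2/2) - Complex.exp (-(z*x) - (x:ℂ)^2/2) := by
    rw [sub_mul, ← Complex.exp_add, ← Complex.exp_add]
    ring_nf
  simpa only [e1, e2] using h5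

private lemma split_integral (z : ℂ) :
    (∫ x : ℝ, Complex.exp (z * x - (x : ℂ) ^ 2 / 2) * (Real.sign x : ℂ))
      = ∫ x in Ioi (0:ℝ),
        (Complex.exp (z*x - (x:ℂ)^2/2) - Complex.exp (-(z*x) - (x:ℂ)^2/2)) := by
  set g₁ : ℝ → ℂ := fun x => Complex.exp (z*x - (x:ℂ)^2/2) with hg₁def
  set g₂ : ℝ → ℂ := fun x => Complex.exp (-(z*x) - (x:ℂ)^2/2) with hg₂def
  have hg1 : Integrable g₁ := by
    have h := integrable_cexp_quadratic (b := 1/2) (by norm_num) z 0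
    refine h.congr (Filter.Eventually.of_forall fun x => ?_)
    simp only [hg₁def]
    congr 1
    ring
  have hg2 : Integrable g₂ := by
    have h := integrable_cexp_quadratic (b := 1/2) (by norm_num) (-z) 0
    refine h.congr (Filter.Eventually.of_forall fun x => ?_)
    simp only [hg₂def]
    congr 1
    ring
  set f : ℝ → ℂ := fun x => Complex.exp (z * x - (x : ℂ) ^ 2 / 2) * (Real.sign x : ℂ)
    with hfdef
  have h0 : ∀ᵐ x : ℝ, x ≠ 0 := by
    refine ae_iff.mpr ?_
    simpa using measure_singleton (0:ℝ)
  have haeIic : f =ᵐ[volume.restrict (Iic (0:ℝ))] (fun x => -g₁ x) := by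
    filter_upwards [ae_restrict_of_ae h0, ae_restrict_mem measurableSet_Iic] with x hx hx'
    have hlt : x < 0 := lt_of_le_of_ne hx' hx
    simp [hfdef, hg₁def, Real.sign_of_neg hlt]
  have haeIoi : f =ᵐ[volume.restrict (Ioi (0:ℝ))] g₁ := by
    filter_upwards [ae_restrict_mem measurableSet_Ioi] with x hx
    simp [hfdef, hg₁def, Real.sign_of_pos hx]
  have hIic : IntegrableOn f (Iic (0:ℝ)) := (hg1.neg.integrableOn).congr haeIic.symm
  have hIoi : IntegrableOn f (Ioi (0:ℝ)) := hg1.integrableOn.congr haeIoi.symm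
  rw [← intervalIntegral.integral_Iic_add_Ioi (b := (0:ℝ)) hIic hIoi]
  rw [integral_congr_ae haeIic, integral_congr_ae haeIoi]
  have hneg : (∫ x in Iic (0:ℝ), -g₁ x) = -∫ x in Ioi (0:ℝ), g₂ x := by
    rw [integral_neg]
    congr 1
    have := integral_comp_neg_Ioi (0:ℝ) g₁
    rw [neg_zero] at this
    rw [← this]
    refine setIntegral_congr_fun measurableSet_Ioi fun x hx => ?_
    simp only [hg₁def, hg₂def]
    congr 1
    push_cast
    ring
  rw [hneg, integral_sub hg1.integrableOn hg2.integrableOn]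
  ring

private lemma factAux (ν : ℕ) :
    2^ν * (Nat.factorial ν * Nat.factorial ν) ≤ Nat.factorial (2*ν+1) := by
  induction ν with
  | zero => simp
  | succ n ih =>
    have h1 : Nat.factorial (2*(n+1)+1) = (2*n+3) * ((2*n+2) * Nat.factorial (2*n+1)) := by
      rw [show 2*(n+1)+1 = (2*n+2)+1 from by ring, Nat.factorial_succ,
        show 2*n+2 = (2*n+1)+1 from rfl, Nat.factorial_succ]
    calc 2^(n+1) * (Nat.factorial (n+1) * Nat.factorial (n+1))
        = (2*(n+1)*(n+1)) * (2^n * (Nat.factorial n * Nat.factorial n)) := by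
          rw [Nat.factorial_succ]; ring
      _ ≤ (2*(n+1)*(n+1)) * Nat.factorial (2*n+1) := Nat.mul_le_mul_left _ ih
      _ ≤ ((2*n+3)*(2*n+2)) * Nat.factorial (2*n+1) :=
          Nat.mul_le_mul_right _ (by nlinarith)
      _ = Nat.factorial (2*(n+1)+1) := by rw [h1]; ring

private lemma real_int (ν : ℕ) :
    IntegrableOn (fun x : ℝ => x ^ (2*ν+1) * rexp (-x^2/2)) (Ioi 0) := by
  have h := integrableOn_rpow_mul_exp_neg_mul_sq (b := 1/2) one_half_pos
    (s := ((2*ν+1 : ℕ) : ℝ))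
    (by have := Nat.cast_nonneg (α := ℝ) (2*ν+1); linarith)
  refine h.congr_fun (fun x hx => ?_) measurableSet_Ioi
  simp only [Real.rpow_natCast]
  ring_nf

private lemma F_int (z : ℂ) (ν : ℕ) :
    Integrable (fun x : ℝ => 2 * z ^ (2*ν+1) / ((Nat.factorial (2*ν+1) : ℕ) : ℂ)
      * ((x:ℂ) ^ (2*ν+1) * Complex.exp (-(x:ℂ)^2/2))) (volume.restrict (Ioi 0)) := by
  have hin : Integrable (fun x : ℝ => (x:ℂ) ^ (2*ν+1) * Complex.exp (-(x:ℂ)^2/2))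
      (volume.restrict (Ioi 0)) := by
    have := (real_int ν).ofReal (𝕜 := ℂ)
    refine this.congr (Filter.Eventually.of_forall fun x => ?_)
    exact (castEq ν x).symm
  exact hin.const_mul _

private lemma F_norm (z : ℂ) (ν : ℕ) :
    ∫ x in Ioi (0:ℝ), ‖2 * z ^ (2*ν+1) / ((Nat.factorial (2*ν+1) : ℕ) : ℂ)
        * ((x:ℂ) ^ (2*ν+1) * Complex.exp (-(x:ℂ)^2/2))‖
      = 2 * ‖z‖^(2*ν+1) / (Nat.factorial (2*ν+1) : ℝ) * (2^ν * (Nat.factorial ν : ℝ)) := by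
  calc ∫ x in Ioi (0:ℝ), ‖2 * z ^ (2*ν+1) / ((Nat.factorial (2*ν+1) : ℕ) : ℂ)
        * ((x:ℂ) ^ (2*ν+1) * Complex.exp (-(x:ℂ)^2/2))‖
      = ∫ x in Ioi (0:ℝ), (2 * ‖z‖^(2*ν+1) / (Nat.factorial (2*ν+1) : ℝ))
        * (x ^ (2*ν+1) * rexp (-x^2/2)) := by
        refine setIntegral_congr_fun measurableSet_Ioi fun x hx => ?_
        have hx' : (0:ℝ) < x := hx
        simp only [castEq]
        rw [norm_mul, Complex.norm_real, Real.norm_eq_abs,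
          abs_of_nonneg (by positivity), norm_div, norm_mul, norm_pow]
        simp
    _ = 2 * ‖z‖^(2*ν+1) / (Nat.factorial (2*ν+1) : ℝ) * (2^ν * (Nat.factorial ν : ℝ)) := by
        rw [integral_const_mul, moment_real]

private lemma F_summable (z : ℂ) :
    Summable (fun ν : ℕ => ∫ x in Ioi (0:ℝ), ‖2 * z ^ (2*ν+1)
        / ((Nat.factorial (2*ν+1) : ℕ) : ℂ)
        * ((x:ℂ) ^ (2*ν+1) * Complex.exp (-(x:ℂ)^2/2))‖) := by
  have hS : Summable (fun ν : ℕ => 2 * ‖z‖^(2*ν+1) / (Nat.factorial (2*ν+1) : ℝ)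
      * (2^ν * (Nat.factorial ν : ℝ))) := by
    refine Summable.of_nonneg_of_le (fun ν => by positivity) (fun ν => ?_)
      ((Real.summable_pow_div_factorial (‖z‖^2)).mul_left (2*‖z‖))
    have h1 : (0:ℝ) < (Nat.factorial (2*ν+1) : ℝ) := by positivity
    have h2 : (0:ℝ) < (Nat.factorial ν : ℝ) := by positivity
    have hfa : (2:ℝ)^ν * ((Nat.factorial ν : ℝ) * (Nat.factorial ν : ℝ))
        ≤ (Nat.factorial (2*ν+1) : ℝ) := by exact_mod_cast factAux ν
    have key : (2:ℝ)^ν * (Nat.factorial ν : ℝ) / (Nat.factorial (2*ν+1) : ℝ)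
        ≤ 1 / (Nat.factorial ν : ℝ) := by
      rw [div_le_div_iff₀ h1 h2]
      nlinarith [hfa]
    have hk : ‖z‖^(2*ν+1) = ‖z‖ * (‖z‖^2)^ν := by
      rw [pow_succ, pow_mul]
      ring
    calc 2 * ‖z‖^(2*ν+1) / (Nat.factorial (2*ν+1) : ℝ) * (2^ν * (Nat.factorial ν : ℝ))
        = (2 * ‖z‖ * (‖z‖^2)^ν)
          * ((2:ℝ)^ν * (Nat.factorial ν : ℝ) / (Nat.factorial (2*ν+1) : ℝ)) := by
          rw [hk]; ring
      _ ≤ (2 * ‖z‖ * (‖z‖^2)^ν) * (1 / (Nat.factorial ν : ℝ)) := by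
          refine mul_le_mul_of_nonneg_left key (by positivity)
      _ = 2 * ‖z‖ * ((‖z‖^2)^ν / (Nat.factorial ν : ℝ)) := by ring
  exact hS.congr fun ν => (F_norm z ν).symm

/-- `∫_ℝ e^{zx-x²/2} sgn(x) dx = Σ_ν (2^{ν+1} ν!/(2ν+1)!) z^{2ν+1}`. -/
theorem integral_exp_sgn (z : ℂ) :
    HasSum
      (fun ν : ℕ =>
        (((2 : ℝ) ^ (ν + 1) * (Nat.factorial ν : ℝ) / (Nat.factorial (2 * ν + 1) : ℝ) : ℝ) : ℂ) *
          z ^ (2 * ν + 1))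
      (∫ x : ℝ, Complex.exp (z * x - (x : ℂ) ^ 2 / 2) * (Real.sign x : ℂ)) := by
  rw [split_integral z]
  have H := hasSum_integral_of_summable_integral_norm
    (F := fun (ν : ℕ) (x : ℝ) => 2 * z ^ (2*ν+1) / ((Nat.factorial (2*ν+1) : ℕ) : ℂ)
      * ((x:ℂ) ^ (2*ν+1) * Complex.exp (-(x:ℂ)^2/2)))
    (μ := volume.restrict (Ioi 0)) (F_int z) (F_summable z)
  have ht : (∫ x in Ioi (0:ℝ), ∑' ν : ℕ, 2 * z ^ (2*ν+1)
        / ((Nat.factorial (2*ν+1) : ℕ) : ℂ)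
        * ((x:ℂ) ^ (2*ν+1) * Complex.exp (-(x:ℂ)^2/2)))
      = ∫ x in Ioi (0:ℝ),
        (Complex.exp (z*x - (x:ℂ)^2/2) - Complex.exp (-(z*x) - (x:ℂ)^2/2)) := by
    refine integral_congr_ae (Filter.Eventually.of_forall fun x => ?_)
    exact (pointwise_hasSum z x).tsum_eq
  rw [ht] at H
  refine H.congr_fun fun ν => ?_
  rw [integral_const_mul, moment_cplx]
  push_cast
  ring
end
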